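/- Let μ be a probability measure on X, κ a Markov kernel from X to Z, q_agg := μ.bind κ, and suppose ∫ KL(κ x ‖ q_agg) dμ(x) < ∞. Then for every probability measure p on Z, ∫ KL(κ x ‖ p) dμ(x) ≥ ∫ KL(κ x ‖ q_agg) dμ(x), with equality if and only if p = q_agg. Consequently, the VAE prior that maximizes the expected ELBO (whose only p-dependent term is −∫ KL(κ x ‖ p) dμ(x)) is uniquely the aggregate posterior q_agg, and the optimality gap for any other prior p equals KL(q_agg ‖ p). -/

import Mathlib

open MeasureTheory ProbabilityTheory
open scoped ENNReal

open Classical in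
/-- Kullback–Leibler divergence: `∫ log (dq/dp) dq` if `q ≪ p` and the log-density
is `q`-integrable, and `∞` otherwise. -/
noncomputable def klDiv {Z : Type*} [MeasurableSpace Z] (q p : Measure Z) : ℝ≥0∞ :=
  if q ≪ p ∧ Integrable (llr q p) q then ENNReal.ofReal (∫ z, llr q p z ∂q) else ⊤

section KLAux

open Real

variable {Z : Type*} [MeasurableSpace Z]

lemma klDiv_of_pos {q p : Measure Z} (h : q ≪ p ∧ Integrable (llr q p) q) :
    klDiv q p = ENNReal.ofReal (∫ z, llr q p z ∂q) := by
  simp only [klDiv, if_pos h]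

lemma klDiv_of_neg {q p : Measure Z} (h : ¬(q ≪ p ∧ Integrable (llr q p) q)) :
    klDiv q p = ⊤ := by
  simp only [klDiv, if_neg h]

lemma ofReal_max_zero (t : ℝ) : ENNReal.ofReal (max t 0) = ENNReal.ofReal t := by
  rcases le_total t 0 with h | h
  · rw [max_eq_right h, ENNReal.ofReal_zero, eq_comm, ENNReal.ofReal_eq_zero]
    exact h
  · rw [max_eq_left h]

lemma max_zero_sub (t : ℝ) : max t 0 = t + max (-t) 0 := by
  rcases le_total t 0 with h | h
  · rw [max_eq_right h, max_eq_left (by linarith)]; ring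
  · rw [max_eq_left h, max_eq_right (by linarith)]; ring

lemma ofReal_tripod {u v w : ℝ} (h : u = v + w) :
    ENNReal.ofReal u + ENNReal.ofReal (-v) + ENNReal.ofReal (-w)
      = ENNReal.ofReal (-u) + ENNReal.ofReal v + ENNReal.ofReal w := by
  rw [← ofReal_max_zero u, ← ofReal_max_zero (-u), ← ofReal_max_zero v,
    ← ofReal_max_zero (-v), ← ofReal_max_zero w, ← ofReal_max_zero (-w),
    ← ENNReal.ofReal_add (le_max_right _ _) (le_max_right _ _),
    ← ENNReal.ofReal_add (add_nonneg (le_max_right _ _) (le_max_right _ _)) (le_max_right _ _),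
    ← ENNReal.ofReal_add (le_max_right _ _) (le_max_right _ _),
    ← ENNReal.ofReal_add (add_nonneg (le_max_right _ _) (le_max_right _ _)) (le_max_right _ _)]
  congr 1
  have h1 := max_zero_sub u
  have h2 := max_zero_sub v
  have h3 := max_zero_sub w
  linarith

/-- The negative part of the log-likelihood ratio has small lintegral. -/
lemma lintegral_ofReal_neg_llr_le (a b : Measure Z) [IsFiniteMeasure a] [IsFiniteMeasure b]
    (hab : a ≪ b) :
    ∫⁻ z, ENNReal.ofReal (-(llr a b z)) ∂a ≤ b Set.univ := by
  have h1 : ∀ᵐ z ∂a, ENNReal.ofReal (-(llr a b z)) ≤ b.rnDeriv a z := by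
    filter_upwards [exp_neg_llr hab] with z hz
    calc ENNReal.ofReal (-(llr a b z))
        ≤ ENNReal.ofReal (rexp (-(llr a b z))) :=
          ENNReal.ofReal_le_ofReal (by linarith [add_one_le_exp (-(llr a b z))])
      _ = ENNReal.ofReal ((b.rnDeriv a z).toReal) := by rw [hz]
      _ ≤ b.rnDeriv a z := ENNReal.ofReal_toReal_le
  exact (lintegral_mono_ae h1).trans Measure.lintegral_rnDeriv_le

lemma integral_toReal_rnDeriv_le_one (a b : Measure Z) [IsProbabilityMeasure a]
    [IsProbabilityMeasure b] :
    ∫ z, (b.rnDeriv a z).toReal ∂a ≤ 1 := by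
  rw [Measure.integral_toReal_rnDeriv', measureReal_def, measureReal_def, measure_univ]
  simp only [ENNReal.toReal_one]
  have : 0 ≤ ((b.singularPart a) Set.univ).toReal := ENNReal.toReal_nonneg
  linarith

/-- Gibbs' inequality, nonnegativity. -/
lemma integral_llr_nonneg (a b : Measure Z) [IsProbabilityMeasure a] [IsProbabilityMeasure b]
    (hab : a ≪ b) (h : Integrable (llr a b) a) : 0 ≤ ∫ z, llr a b z ∂a := by
  have hint : Integrable (fun z => 1 - (b.rnDeriv a z).toReal) a :=
    (integrable_const 1).sub Measure.integrable_toReal_rnDeriv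
  have hmono : ∀ᵐ z ∂a, 1 - (b.rnDeriv a z).toReal ≤ llr a b z := by
    filter_upwards [exp_neg_llr hab] with z hz
    have h2 := add_one_le_exp (-(llr a b z))
    rw [hz] at h2
    linarith
  have h2 : ∫ z, (1 - (b.rnDeriv a z).toReal) ∂a ≤ ∫ z, llr a b z ∂a :=
    integral_mono_ae hint h hmono
  have h3 : ∫ z, (1 - (b.rnDeriv a z).toReal) ∂a
      = 1 - ∫ z, (b.rnDeriv a z).toReal ∂a := by
    rw [integral_sub (integrable_const 1) Measure.integrable_toReal_rnDeriv, integral_const]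
    simp
  have h4 := integral_toReal_rnDeriv_le_one a b
  linarith

/-- Gibbs' inequality, equality case. -/
lemma eq_of_integral_llr_nonpos (a b : Measure Z) [IsProbabilityMeasure a]
    [IsProbabilityMeasure b] (hab : a ≪ b) (h : Integrable (llr a b) a)
    (hle : ∫ z, llr a b z ∂a ≤ 0) : a = b := by
  have hnn := integral_llr_nonneg a b hab h
  have hzero : ∫ z, llr a b z ∂a = 0 := le_antisymm hle hnn
  set g : Z → ℝ := fun z => (b.rnDeriv a z).toReal - 1 + llr a b z with hgdef
  have hgint : Integrable g a :=
    (Measure.integrable_toReal_rnDeriv.sub (integrable_const 1)).add h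
  have hgnn : 0 ≤ᵐ[a] g := by
    filter_upwards [exp_neg_llr hab] with z hz
    have h2 := add_one_le_exp (-(llr a b z))
    rw [hz] at h2
    simp only [hgdef, Pi.zero_apply]
    linarith
  have hf1 : Integrable (fun z => (b.rnDeriv a z).toReal - 1) a :=
    Measure.integrable_toReal_rnDeriv.sub (integrable_const 1)
  have hgint0 : ∫ z, g z ∂a
      = ∫ z, (b.rnDeriv a z).toReal ∂a - 1 + ∫ z, llr a b z ∂a := by
    rw [hgdef]
    rw [integral_add hf1 h,
      integral_sub Measure.integrable_toReal_rnDeriv (integrable_const 1), integral_const]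
    simp
  have htle := integral_toReal_rnDeriv_le_one a b
  have hg0 : ∫ z, g z ∂a = 0 := by
    refine le_antisymm ?_ (integral_nonneg_of_ae hgnn)
    rw [hgint0, hzero]
    linarith
  have hitoReal : ∫ z, (b.rnDeriv a z).toReal ∂a = 1 := by
    rw [hgint0, hzero] at hg0
    linarith
  have hsing : b.singularPart a = 0 := by
    have h5 := Measure.integral_toReal_rnDeriv' (μ := b) (ν := a)
    rw [hitoReal, measureReal_def, measureReal_def, measure_univ, ENNReal.toReal_one] at h5
    have hs0 : ((b.singularPart a) Set.univ).toReal = 0 := by linarith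
    have hfinS : (b.singularPart a) Set.univ ≠ ⊤ :=
      (lt_of_le_of_lt ((Measure.singularPart_le b a) Set.univ) (measure_lt_top b Set.univ)).ne
    have huniv0 : (b.singularPart a) Set.univ = 0 := by
      rcases (ENNReal.toReal_eq_zero_iff _).mp hs0 with h' | h'
      · exact h'
      · exact absurd h' hfinS
    exact Measure.measure_univ_eq_zero.mp huniv0
  have hba : b ≪ a := by
    have hdec := Measure.rnDeriv_add_singularPart b a
    rw [hsing, add_zero] at hdec
    rw [← hdec]
    exact withDensity_absolutelyContinuous _ _
  have hllr0 : llr a b =ᵐ[a] 0 := by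
    have hgeq : g =ᵐ[a] 0 := (integral_eq_zero_iff_of_nonneg_ae hgnn hgint).mp hg0
    filter_upwards [hgeq, exp_neg_llr hab] with z hz1 hz2
    simp only [hgdef, Pi.zero_apply] at hz1 ⊢
    by_contra hne
    have hstrict := add_one_lt_exp (neg_ne_zero.mpr hne)
    rw [hz2] at hstrict
    linarith
  have hone : a.rnDeriv b =ᵐ[a] 1 := by
    filter_upwards [hllr0, Measure.rnDeriv_pos hab, hab.ae_le (Measure.rnDeriv_lt_top a b)]
      with z h0 hpos hlt
    simp only [Pi.zero_apply] at h0
    have hne0 : (a.rnDeriv b z).toReal ≠ 0 :=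
      ENNReal.toReal_ne_zero.mpr ⟨hpos.ne', hlt.ne⟩
    have htR : (a.rnDeriv b z).toReal = 1 := by
      rcases Real.log_eq_zero.mp h0 with h' | h' | h'
      · exact absurd h' hne0
      · exact h'
      · exfalso
        have := ENNReal.toReal_nonneg (a := a.rnDeriv b z)
        linarith
    have : a.rnDeriv b z = 1 := by
      rw [← ENNReal.ofReal_toReal hlt.ne, htR]
      simp
    simpa using this
  exact (Measure.rnDeriv_eq_one_iff_eq hab).mp (hba.ae_le hone)

/-- Chain rule for log-likelihood ratios. -/
lemma llr_chain (a b c : Measure Z) [IsFiniteMeasure a] [IsFiniteMeasure b] [IsFiniteMeasure c]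
    (hab : a ≪ b) (hbc : b ≪ c) :
    llr a c =ᵐ[a] fun z => llr a b z + llr b c z := by
  have hac := hab.trans hbc
  filter_upwards [hac.ae_le (Measure.rnDeriv_mul_rnDeriv hab (κ := c)),
    Measure.rnDeriv_pos hab, hab.ae_le (Measure.rnDeriv_pos hbc),
    hab.ae_le (Measure.rnDeriv_lt_top a b), hac.ae_le (Measure.rnDeriv_lt_top b c)]
    with z hmul hpos1 hpos2 hlt1 hlt2
  have hne1 : (a.rnDeriv b z).toReal ≠ 0 := ENNReal.toReal_ne_zero.mpr ⟨hpos1.ne', hlt1.ne⟩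
  have hne2 : (b.rnDeriv c z).toReal ≠ 0 := ENNReal.toReal_ne_zero.mpr ⟨hpos2.ne', hlt2.ne⟩
  unfold llr
  rw [← hmul, Pi.mul_apply, ENNReal.toReal_mul, Real.log_mul hne1 hne2]

/-- `klDiv a b` plus the negative part of `llr` equals the positive part. -/
lemma klDiv_add_neg_eq_pos (a b : Measure Z) [IsProbabilityMeasure a] [IsProbabilityMeasure b]
    (hab : a ≪ b) :
    klDiv a b + ∫⁻ z, ENNReal.ofReal (-(llr a b z)) ∂a
      = ∫⁻ z, ENNReal.ofReal (llr a b z) ∂a := by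
  by_cases hint : Integrable (llr a b) a
  · have hposint : Integrable (fun z => max (llr a b z) 0) a := hint.pos_part
    have hnegint : Integrable (fun z => max (-(llr a b z)) 0) a := by
      have := hint.neg.pos_part
      simpa using this
    have hN : ∫⁻ z, ENNReal.ofReal (-(llr a b z)) ∂a
        = ENNReal.ofReal (∫ z, max (-(llr a b z)) 0 ∂a) := by
      calc ∫⁻ z, ENNReal.ofReal (-(llr a b z)) ∂a
          = ∫⁻ z, ENNReal.ofReal (max (-(llr a b z)) 0) ∂a :=
            lintegral_congr fun z => (ofReal_max_zero _).symm
        _ = ENNReal.ofReal (∫ z, max (-(llr a b z)) 0 ∂a) :=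
            (ofReal_integral_eq_lintegral_ofReal hnegint
              (Filter.Eventually.of_forall fun z => le_max_right _ _)).symm
    have hP : ∫⁻ z, ENNReal.ofReal (llr a b z) ∂a
        = ENNReal.ofReal (∫ z, max (llr a b z) 0 ∂a) := by
      calc ∫⁻ z, ENNReal.ofReal (llr a b z) ∂a
          = ∫⁻ z, ENNReal.ofReal (max (llr a b z) 0) ∂a :=
            lintegral_congr fun z => (ofReal_max_zero _).symm
        _ = ENNReal.ofReal (∫ z, max (llr a b z) 0 ∂a) :=
            (ofReal_integral_eq_lintegral_ofReal hposint
              (Filter.Eventually.of_forall fun z => le_max_right _ _)).symm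
    have hsum : ∫ z, max (llr a b z) 0 ∂a
        = ∫ z, llr a b z ∂a + ∫ z, max (-(llr a b z)) 0 ∂a := by
      rw [← integral_add hint hnegint]
      exact integral_congr_ae (Filter.Eventually.of_forall fun z => max_zero_sub _)
    rw [klDiv_of_pos ⟨hab, hint⟩, hN, hP, hsum]
    exact (ENNReal.ofReal_add (integral_llr_nonneg a b hab hint)
      (integral_nonneg fun z => le_max_right _ _)).symm
  · have hkl : klDiv a b = ⊤ := klDiv_of_neg fun hc => hint hc.2
    have hNfin : ∫⁻ z, ENNReal.ofReal (-(llr a b z)) ∂a ≠ ⊤ :=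
      ((lintegral_ofReal_neg_llr_le a b hab).trans_lt (measure_lt_top b _)).ne
    have hP : ∫⁻ z, ENNReal.ofReal (llr a b z) ∂a = ⊤ := by
      by_contra hP
      refine hint ⟨(measurable_llr a b).aestronglyMeasurable, ?_⟩
      rw [hasFiniteIntegral_iff_norm]
      have heq : ∀ z, ENNReal.ofReal ‖llr a b z‖
          = ENNReal.ofReal (llr a b z) + ENNReal.ofReal (-(llr a b z)) := by
        intro z
        rcases le_total (llr a b z) 0 with h' | h'
        · rw [Real.norm_eq_abs, abs_of_nonpos h', ENNReal.ofReal_eq_zero.mpr h', zero_add]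
        · rw [Real.norm_eq_abs, abs_of_nonneg h',
            ENNReal.ofReal_eq_zero.mpr (by linarith : -(llr a b z) ≤ 0), add_zero]
      simp_rw [heq]
      rw [lintegral_add_left (measurable_llr a b).ennreal_ofReal]
      exact ENNReal.add_lt_top.mpr ⟨lt_top_iff_ne_top.mpr hP, lt_top_iff_ne_top.mpr hNfin⟩
    rw [hkl, hP, top_add]

/-- Base-change identity for `klDiv` (compensation identity, pointwise form). -/
lemma klDiv_base_change (a b c : Measure Z) [IsProbabilityMeasure a] [IsProbabilityMeasure b]
    [IsProbabilityMeasure c] (hab : a ≪ b) (hbc : b ≪ c) :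
    klDiv a c + ∫⁻ z, ENNReal.ofReal (-(llr b c z)) ∂a
      = klDiv a b + ∫⁻ z, ENNReal.ofReal (llr b c z) ∂a := by
  have hac := hab.trans hbc
  have hpt : (fun z => ENNReal.ofReal (llr a c z) + ENNReal.ofReal (-(llr a b z))
        + ENNReal.ofReal (-(llr b c z)))
      =ᵐ[a] (fun z => ENNReal.ofReal (-(llr a c z)) + ENNReal.ofReal (llr a b z)
        + ENNReal.ofReal (llr b c z)) := by
    filter_upwards [llr_chain a b c hab hbc] with z hz
    exact ofReal_tripod hz
  have hL := lintegral_congr_ae hpt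
  rw [lintegral_add_left
      (f := fun z => ENNReal.ofReal (llr a c z) + ENNReal.ofReal (-(llr a b z)))
      ((measurable_llr a c).ennreal_ofReal.add (measurable_llr a b).neg.ennreal_ofReal),
    lintegral_add_left (measurable_llr a c).ennreal_ofReal,
    lintegral_add_left
      (f := fun z => ENNReal.ofReal (-(llr a c z)) + ENNReal.ofReal (llr a b z))
      ((measurable_llr a c).neg.ennreal_ofReal.add (measurable_llr a b).ennreal_ofReal),
    lintegral_add_left (f := fun z => ENNReal.ofReal (-(llr a c z)))
      (measurable_llr a c).neg.ennreal_ofReal] at hL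
  have h1 := klDiv_add_neg_eq_pos a c hac
  have h2 := klDiv_add_neg_eq_pos a b hab
  have hNac : ∫⁻ z, ENNReal.ofReal (-(llr a c z)) ∂a ≠ ⊤ :=
    ((lintegral_ofReal_neg_llr_le a c hac).trans_lt (measure_lt_top c _)).ne
  have hNab : ∫⁻ z, ENNReal.ofReal (-(llr a b z)) ∂a ≠ ⊤ :=
    ((lintegral_ofReal_neg_llr_le a b hab).trans_lt (measure_lt_top b _)).ne
  refine (ENNReal.add_left_inj (ENNReal.add_ne_top.mpr ⟨hNac, hNab⟩)).mp ?_
  calc klDiv a c + ∫⁻ z, ENNReal.ofReal (-(llr b c z)) ∂a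
        + (∫⁻ z, ENNReal.ofReal (-(llr a c z)) ∂a + ∫⁻ z, ENNReal.ofReal (-(llr a b z)) ∂a)
      = (klDiv a c + ∫⁻ z, ENNReal.ofReal (-(llr a c z)) ∂a)
        + ∫⁻ z, ENNReal.ofReal (-(llr a b z)) ∂a
        + ∫⁻ z, ENNReal.ofReal (-(llr b c z)) ∂a := by ring
    _ = ∫⁻ z, ENNReal.ofReal (llr a c z) ∂a + ∫⁻ z, ENNReal.ofReal (-(llr a b z)) ∂a
        + ∫⁻ z, ENNReal.ofReal (-(llr b c z)) ∂a := by rw [h1]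
    _ = ∫⁻ z, ENNReal.ofReal (-(llr a c z)) ∂a + ∫⁻ z, ENNReal.ofReal (llr a b z) ∂a
        + ∫⁻ z, ENNReal.ofReal (llr b c z) ∂a := hL
    _ = ∫⁻ z, ENNReal.ofReal (-(llr a c z)) ∂a
        + (klDiv a b + ∫⁻ z, ENNReal.ofReal (-(llr a b z)) ∂a)
        + ∫⁻ z, ENNReal.ofReal (llr b c z) ∂a := by rw [h2]
    _ = klDiv a b + ∫⁻ z, ENNReal.ofReal (llr b c z) ∂a
        + (∫⁻ z, ENNReal.ofReal (-(llr a c z)) ∂a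
          + ∫⁻ z, ENNReal.ofReal (-(llr a b z)) ∂a) := by ring

/-- If `b` vanishes on the set where the density of `ν` w.r.t. `χ` vanishes, and `b ≪ χ`,
`ν ≪ χ`, then `b ≪ ν`. -/
lemma absolutelyContinuous_of_rnDeriv_zero_null {ν b χ : Measure Z} [SigmaFinite ν]
    [SigmaFinite χ]
    (hνχ : ν ≪ χ) (hbχ : b ≪ χ) (hb0 : b {z | ν.rnDeriv χ z = 0} = 0) : b ≪ ν := by
  intro s hs0
  obtain ⟨t, hst, htm, ht0⟩ := exists_measurable_superset_of_null hs0
  refine measure_mono_null hst ?_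
  set E := {z | ν.rnDeriv χ z = 0} with hE
  have hrest : χ (t \ E) = 0 := by
    have h1 : ∫⁻ z in t, ν.rnDeriv χ z ∂χ = 0 := by
      rw [← withDensity_apply _ htm, Measure.withDensity_rnDeriv_eq ν χ hνχ]
      exact ht0
    have h2 : ∀ᵐ z ∂χ.restrict t, ν.rnDeriv χ z = 0 := by
      have := (lintegral_eq_zero_iff (Measure.measurable_rnDeriv ν χ)).mp h1
      filter_upwards [this] with z hz using hz
    have h3 : χ.restrict t {z | ν.rnDeriv χ z ≠ 0} = 0 := by
      rw [← ae_iff] at *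
      exact h2
    have hEc : {z | ν.rnDeriv χ z ≠ 0} = Eᶜ := rfl
    rw [hEc] at h3
    have hEm : MeasurableSet E := Measure.measurable_rnDeriv ν χ (measurableSet_singleton 0)
    rw [Measure.restrict_apply hEm.compl] at h3
    rw [Set.diff_eq, Set.inter_comm]
    exact h3
  have hbt1 : b (t \ E) = 0 := hbχ hrest
  have hbt2 : b (t ∩ E) = 0 := measure_mono_null Set.inter_subset_right hb0
  have : b t ≤ 0 := by
    calc b t = b ((t \ E) ∪ (t ∩ E)) := by rw [Set.diff_union_inter]
      _ ≤ b (t \ E) + b (t ∩ E) := measure_union_le _ _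
      _ = 0 := by rw [hbt1, hbt2, add_zero]
  exact le_antisymm this zero_le

end KLAux

/-- If `∫ KL(κ x ‖ q_agg) dμ(x) < ∞` (with `q_agg = μ.bind κ`), then for every probability
measure `p` on `Z`: the average posterior-to-prior KL is minimized by `q_agg`, i.e.
`∫ KL(κ x ‖ p) dμ ≥ ∫ KL(κ x ‖ q_agg) dμ`, with equality iff `p = q_agg`, and the optimality
gap for any other prior `p` equals `KL(q_agg ‖ p)`. -/
theorem aggregate_posterior_is_unique_optimal_prior {X Z : Type*}
    [MeasurableSpace X] [MeasurableSpace Z]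
    (μ : Measure X) [IsProbabilityMeasure μ] (κ : ProbabilityTheory.Kernel X Z)
    [ProbabilityTheory.IsMarkovKernel κ]
    (hfin : ∫⁻ x, klDiv (κ x) (μ.bind κ) ∂μ < ⊤) :
    ∀ p : Measure Z, IsProbabilityMeasure p →
      (∫⁻ x, klDiv (κ x) (μ.bind κ) ∂μ ≤ ∫⁻ x, klDiv (κ x) p ∂μ) ∧
      ((∫⁻ x, klDiv (κ x) p ∂μ = ∫⁻ x, klDiv (κ x) (μ.bind κ) ∂μ) ↔ p = μ.bind κ) ∧
      (∫⁻ x, klDiv (κ x) p ∂μ - ∫⁻ x, klDiv (κ x) (μ.bind κ) ∂μ = klDiv (μ.bind κ) p) := by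
  intro p hp
  set q : Measure Z := μ.bind κ with hq
  have hqprob : IsProbabilityMeasure q := by
    constructor
    rw [hq, Measure.bind_apply MeasurableSet.univ (Kernel.measurable κ).aemeasurable]
    simp
  have hkernel_zero : ∀ (E : Set Z), MeasurableSet E → q E = 0 → ∀ᵐ x ∂μ, κ x E = 0 := by
    intro E hEm hE0
    have hzero : ∫⁻ x, κ x E ∂μ = 0 := by
      rw [← Measure.bind_apply hEm (Kernel.measurable κ).aemeasurable, ← hq]
      exact hE0
    have := (lintegral_eq_zero_iff (Kernel.measurable_coe κ hEm)).mp hzero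
    filter_upwards [this] with x hx using hx
  have star : ∫⁻ x, klDiv (κ x) p ∂μ = ∫⁻ x, klDiv (κ x) q ∂μ + klDiv q p := by
    by_cases hqp : q ≪ p
    · -- the midpoint measure
      set χ : Measure Z := (2⁻¹ : ℝ≥0∞) • (q + p) with hχ
      have hχprob : IsProbabilityMeasure χ := by
        constructor
        rw [hχ, Measure.smul_apply, Measure.add_apply, measure_univ, measure_univ, smul_eq_mul,
          one_add_one_eq_two]
        exact ENNReal.inv_mul_cancel (by norm_num) (by norm_num)
      have hqpχ : q + p ≪ χ := by
        intro s hs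
        rw [hχ, Measure.smul_apply, smul_eq_mul, mul_eq_zero] at hs
        rcases hs with h | h
        · exact absurd h (by norm_num)
        · exact h
      have hqχ : q ≪ χ := (Measure.absolutelyContinuous_of_le (Measure.le_add_right le_rfl)).trans hqpχ
      have hpχ : p ≪ χ := (Measure.absolutelyContinuous_of_le (Measure.le_add_left le_rfl)).trans hqpχ
      -- density bounds
      have hsum2 : q + p = (2 : ℝ≥0∞) • χ := by
        rw [hχ, smul_smul, ENNReal.mul_inv_cancel (by norm_num) (by norm_num), one_smul]
      have h2χ : (q + p).rnDeriv χ =ᵐ[χ] fun _ => 2 := by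
        rw [hsum2]
        filter_upwards [Measure.rnDeriv_smul_left_of_ne_top χ χ
          (by norm_num : (2 : ℝ≥0∞) ≠ ⊤), Measure.rnDeriv_self χ] with z h1 h2
        rw [h1, Pi.smul_apply, h2, smul_eq_mul, mul_one]
      have hd2 : ∀ᵐ z ∂χ, q.rnDeriv χ z ≤ 2 ∧ p.rnDeriv χ z ≤ 2 := by
        filter_upwards [Measure.rnDeriv_add' q p χ, h2χ] with z h1 h2
        have hsum : q.rnDeriv χ z + p.rnDeriv χ z = 2 := by
          rw [← h2, h1, Pi.add_apply]
        constructor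
        · calc q.rnDeriv χ z ≤ q.rnDeriv χ z + p.rnDeriv χ z := le_self_add
            _ = 2 := hsum
        · calc p.rnDeriv χ z ≤ q.rnDeriv χ z + p.rnDeriv χ z := le_add_self
            _ = 2 := hsum
      have hloghelp : ∀ t : ℝ≥0∞, t ≤ 2 → Real.log t.toReal ≤ Real.log 2 := by
        intro t ht
        have htR : t.toReal ≤ 2 := by
          calc t.toReal ≤ (2 : ℝ≥0∞).toReal := ENNReal.toReal_mono (by norm_num) ht
            _ = 2 := by norm_num
        rcases eq_or_lt_of_le (ENNReal.toReal_nonneg (a := t)) with h' | h'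
        · rw [← h', Real.log_zero]
          exact Real.log_nonneg (by norm_num)
        · exact Real.log_le_log h' htR
      have hllrle : ∀ᵐ z ∂χ, llr q χ z ≤ Real.log 2 ∧ llr p χ z ≤ Real.log 2 := by
        filter_upwards [hd2] with z hz
        exact ⟨hloghelp _ hz.1, hloghelp _ hz.2⟩
      -- vanishing sets
      have hEqm : MeasurableSet {z | q.rnDeriv χ z = 0} :=
        Measure.measurable_rnDeriv q χ (measurableSet_singleton 0)
      have hEpm : MeasurableSet {z | p.rnDeriv χ z = 0} :=
        Measure.measurable_rnDeriv p χ (measurableSet_singleton 0)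
      have hnull_of : ∀ (ν : Measure Z), SigmaFinite ν → ν ≪ χ →
          ν {z | ν.rnDeriv χ z = 0} = 0 := by
        intro ν hσ hνχ
        haveI := hσ
        have hm : MeasurableSet {z | ν.rnDeriv χ z = 0} :=
          Measure.measurable_rnDeriv ν χ (measurableSet_singleton 0)
        have key : (χ.withDensity (ν.rnDeriv χ)) {z | ν.rnDeriv χ z = 0} = 0 := by
          rw [withDensity_apply _ hm]
          calc ∫⁻ z in {z | ν.rnDeriv χ z = 0}, ν.rnDeriv χ z ∂χ
              = ∫⁻ _ in {z | ν.rnDeriv χ z = 0}, 0 ∂χ :=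
                setLIntegral_congr_fun hm (fun z hz => hz)
            _ = 0 := by simp
        rwa [Measure.withDensity_rnDeriv_eq ν χ hνχ] at key
      have hqEq : q {z | q.rnDeriv χ z = 0} = 0 := hnull_of q inferInstance hqχ
      have hqEp : q {z | p.rnDeriv χ z = 0} = 0 := hqp (hnull_of p inferInstance hpχ)
      -- measurability of the x-indexed lintegrals
      have hmcq : Measurable fun z => ENNReal.ofReal (llr q χ z) :=
        (measurable_llr q χ).ennreal_ofReal
      have hmdq : Measurable fun z => ENNReal.ofReal (-(llr q χ z)) :=
        (measurable_llr q χ).neg.ennreal_ofReal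
      have hmcp : Measurable fun z => ENNReal.ofReal (llr p χ z) :=
        (measurable_llr p χ).ennreal_ofReal
      have hmdp : Measurable fun z => ENNReal.ofReal (-(llr p χ z)) :=
        (measurable_llr p χ).neg.ennreal_ofReal
      have hxcq : Measurable fun x => ∫⁻ z, ENNReal.ofReal (llr q χ z) ∂κ x :=
        Measurable.lintegral_kernel_prod_right (hmcq.comp measurable_snd)
      have hxdq : Measurable fun x => ∫⁻ z, ENNReal.ofReal (-(llr q χ z)) ∂κ x :=
        Measurable.lintegral_kernel_prod_right (hmdq.comp measurable_snd)
      have hxcp : Measurable fun x => ∫⁻ z, ENNReal.ofReal (llr p χ z) ∂κ x :=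
        Measurable.lintegral_kernel_prod_right (hmcp.comp measurable_snd)
      have hxdp : Measurable fun x => ∫⁻ z, ENNReal.ofReal (-(llr p χ z)) ∂κ x :=
        Measurable.lintegral_kernel_prod_right (hmdp.comp measurable_snd)
      -- pointwise identities a.e. in x
      have hIDq : ∀ᵐ x ∂μ, klDiv (κ x) χ + ∫⁻ z, ENNReal.ofReal (-(llr q χ z)) ∂κ x
          = klDiv (κ x) q + ∫⁻ z, ENNReal.ofReal (llr q χ z) ∂κ x := by
        filter_upwards [hkernel_zero _ hEqm hqEq] with x hx
        by_cases hκχ : κ x ≪ χ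
        · exact klDiv_base_change (κ x) q χ
            (absolutelyContinuous_of_rnDeriv_zero_null hqχ hκχ hx) hqχ
        · rw [klDiv_of_neg fun hc => hκχ hc.1,
            klDiv_of_neg fun hc => hκχ (hc.1.trans hqχ), top_add, top_add]
      have hIDp : ∀ᵐ x ∂μ, klDiv (κ x) χ + ∫⁻ z, ENNReal.ofReal (-(llr p χ z)) ∂κ x
          = klDiv (κ x) p + ∫⁻ z, ENNReal.ofReal (llr p χ z) ∂κ x := by
        filter_upwards [hkernel_zero _ hEpm hqEp] with x hx
        by_cases hκχ : κ x ≪ χ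
        · exact klDiv_base_change (κ x) p χ
            (absolutelyContinuous_of_rnDeriv_zero_null hpχ hκχ hx) hpχ
        · rw [klDiv_of_neg fun hc => hκχ hc.1,
            klDiv_of_neg fun hc => hκχ (hc.1.trans hpχ), top_add, top_add]
      -- integrate them
      have hbindcq : ∫⁻ x, ∫⁻ z, ENNReal.ofReal (llr q χ z) ∂κ x ∂μ
          = ∫⁻ z, ENNReal.ofReal (llr q χ z) ∂q := by
        rw [hq, Measure.lintegral_bind (Kernel.measurable κ).aemeasurable hmcq.aemeasurable]
      have hbinddq : ∫⁻ x, ∫⁻ z, ENNReal.ofReal (-(llr q χ z)) ∂κ x ∂μ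
          = ∫⁻ z, ENNReal.ofReal (-(llr q χ z)) ∂q := by
        rw [hq, Measure.lintegral_bind (Kernel.measurable κ).aemeasurable hmdq.aemeasurable]
      have hbindcp : ∫⁻ x, ∫⁻ z, ENNReal.ofReal (llr p χ z) ∂κ x ∂μ
          = ∫⁻ z, ENNReal.ofReal (llr p χ z) ∂q := by
        rw [hq, Measure.lintegral_bind (Kernel.measurable κ).aemeasurable hmcp.aemeasurable]
      have hbinddp : ∫⁻ x, ∫⁻ z, ENNReal.ofReal (-(llr p χ z)) ∂κ x ∂μ
          = ∫⁻ z, ENNReal.ofReal (-(llr p χ z)) ∂q := by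
        rw [hq, Measure.lintegral_bind (Kernel.measurable κ).aemeasurable hmdp.aemeasurable]
      have hEq1 : ∫⁻ x, klDiv (κ x) χ ∂μ + ∫⁻ z, ENNReal.ofReal (-(llr q χ z)) ∂q
          = ∫⁻ x, klDiv (κ x) q ∂μ + ∫⁻ z, ENNReal.ofReal (llr q χ z) ∂q := by
        have h := lintegral_congr_ae hIDq
        rw [lintegral_add_right _ hxdq, lintegral_add_right _ hxcq, hbinddq, hbindcq] at h
        exact h
      have hEq2 : ∫⁻ x, klDiv (κ x) χ ∂μ + ∫⁻ z, ENNReal.ofReal (-(llr p χ z)) ∂q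
          = ∫⁻ x, klDiv (κ x) p ∂μ + ∫⁻ z, ENNReal.ofReal (llr p χ z) ∂q := by
        have h := lintegral_congr_ae hIDp
        rw [lintegral_add_right _ hxdp, lintegral_add_right _ hxcp, hbinddp, hbindcp] at h
        exact h
      -- chain rule over q: llr q χ = llr q p + llr p χ
      have hE3 : ∫⁻ z, ENNReal.ofReal (llr q χ z) ∂q
            + ∫⁻ z, ENNReal.ofReal (-(llr q p z)) ∂q
            + ∫⁻ z, ENNReal.ofReal (-(llr p χ z)) ∂q
          = ∫⁻ z, ENNReal.ofReal (-(llr q χ z)) ∂q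
            + ∫⁻ z, ENNReal.ofReal (llr q p z) ∂q
            + ∫⁻ z, ENNReal.ofReal (llr p χ z) ∂q := by
        have hpt : (fun z => ENNReal.ofReal (llr q χ z) + ENNReal.ofReal (-(llr q p z))
              + ENNReal.ofReal (-(llr p χ z)))
            =ᵐ[q] (fun z => ENNReal.ofReal (-(llr q χ z)) + ENNReal.ofReal (llr q p z)
              + ENNReal.ofReal (llr p χ z)) := by
          filter_upwards [llr_chain q p χ hqp hpχ] with z hz
          exact ofReal_tripod hz
        have h := lintegral_congr_ae hpt
        rw [lintegral_add_left
            (f := fun z => ENNReal.ofReal (llr q χ z) + ENNReal.ofReal (-(llr q p z)))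
            (hmcq.add (measurable_llr q p).neg.ennreal_ofReal),
          lintegral_add_left hmcq,
          lintegral_add_left
            (f := fun z => ENNReal.ofReal (-(llr q χ z)) + ENNReal.ofReal (llr q p z))
            (hmdq.add (measurable_llr q p).ennreal_ofReal),
          lintegral_add_left hmdq] at h
        exact h
      have hE4 : klDiv q p + ∫⁻ z, ENNReal.ofReal (-(llr q p z)) ∂q
          = ∫⁻ z, ENNReal.ofReal (llr q p z) ∂q := klDiv_add_neg_eq_pos q p hqp
      -- finiteness of the bookkeeping terms
      have hNQ : ∫⁻ z, ENNReal.ofReal (-(llr q χ z)) ∂q ≠ ⊤ :=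
        ((lintegral_ofReal_neg_llr_le q χ hqχ).trans_lt (measure_lt_top χ _)).ne
      have hNqp : ∫⁻ z, ENNReal.ofReal (-(llr q p z)) ∂q ≠ ⊤ :=
        ((lintegral_ofReal_neg_llr_le q p hqp).trans_lt (measure_lt_top p _)).ne
      have hPQ : ∫⁻ z, ENNReal.ofReal (llr q χ z) ∂q ≠ ⊤ := by
        have hb : ∫⁻ z, ENNReal.ofReal (llr q χ z) ∂q
            ≤ ∫⁻ _, ENNReal.ofReal (Real.log 2) ∂q := by
          refine lintegral_mono_ae ?_
          filter_upwards [hqχ.ae_le hllrle] with z hz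
          exact ENNReal.ofReal_le_ofReal hz.1
        refine (hb.trans_lt ?_).ne
        rw [lintegral_const]
        exact ENNReal.mul_lt_top ENNReal.ofReal_lt_top (measure_lt_top q _)
      have hPP : ∫⁻ z, ENNReal.ofReal (llr p χ z) ∂q ≠ ⊤ := by
        have hb : ∫⁻ z, ENNReal.ofReal (llr p χ z) ∂q
            ≤ ∫⁻ _, ENNReal.ofReal (Real.log 2) ∂q := by
          refine lintegral_mono_ae ?_
          filter_upwards [hqχ.ae_le hllrle] with z hz
          exact ENNReal.ofReal_le_ofReal hz.2
        refine (hb.trans_lt ?_).ne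
        rw [lintegral_const]
        exact ENNReal.mul_lt_top ENNReal.ofReal_lt_top (measure_lt_top q _)
      -- assemble
      set F := ∫⁻ x, klDiv (κ x) p ∂μ
      set A := ∫⁻ x, klDiv (κ x) q ∂μ
      set K := ∫⁻ x, klDiv (κ x) χ ∂μ
      set PQ := ∫⁻ z, ENNReal.ofReal (llr q χ z) ∂q
      set NQ := ∫⁻ z, ENNReal.ofReal (-(llr q χ z)) ∂q
      set PP := ∫⁻ z, ENNReal.ofReal (llr p χ z) ∂q
      set NP := ∫⁻ z, ENNReal.ofReal (-(llr p χ z)) ∂q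
      set Pqp := ∫⁻ z, ENNReal.ofReal (llr q p z) ∂q
      set Nqp := ∫⁻ z, ENNReal.ofReal (-(llr q p z)) ∂q
      have hfin4 : PP + NQ + Nqp + PQ ≠ ⊤ := by
        simp only [ENNReal.add_ne_top]
        exact ⟨⟨⟨hPP, hNQ⟩, hNqp⟩, hPQ⟩
      refine (ENNReal.add_left_inj hfin4).mp ?_
      calc F + (PP + NQ + Nqp + PQ)
          = F + PP + (NQ + Nqp + PQ) := by ring
        _ = K + NP + (NQ + Nqp + PQ) := by rw [hEq2]
        _ = K + NQ + (PQ + Nqp + NP) := by ring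
        _ = A + PQ + (PQ + Nqp + NP) := by rw [hEq1]
        _ = A + PQ + (NQ + Pqp + PP) := by rw [hE3]
        _ = A + Pqp + (PP + NQ + PQ) := by ring
        _ = A + (klDiv q p + Nqp) + (PP + NQ + PQ) := by rw [hE4]
        _ = A + klDiv q p + (PP + NQ + Nqp + PQ) := by ring
    · -- q is not absolutely continuous w.r.t. p
      have hkl : klDiv q p = ⊤ := klDiv_of_neg fun hc => hqp hc.1
      have hF : ∫⁻ x, klDiv (κ x) p ∂μ = ⊤ := by
        obtain ⟨s, hps, hqs⟩ : ∃ s, p s = 0 ∧ q s ≠ 0 := by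
          by_contra h
          push_neg at h
          exact hqp (Measure.AbsolutelyContinuous.mk fun s _ hs => h s hs)
        obtain ⟨t, hst, htm, hpt⟩ := exists_measurable_superset_of_null hps
        have hqt : q t ≠ 0 := fun h0 => hqs (measure_mono_null hst h0)
        have hSm : MeasurableSet {x | κ x t ≠ 0} := by
          have := Kernel.measurable_coe κ htm
          exact this (measurableSet_singleton 0).compl
        have hμS : μ {x | κ x t ≠ 0} ≠ 0 := by
          intro h0
          apply hqt
          rw [hq, Measure.bind_apply htm (Kernel.measurable κ).aemeasurable,
            lintegral_eq_zero_iff (Kernel.measurable_coe κ htm)]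
          rw [Filter.EventuallyEq, ae_iff]
          simpa using h0
        refine top_le_iff.mp ?_
        calc (⊤ : ℝ≥0∞) = ⊤ * μ {x | κ x t ≠ 0} := (ENNReal.top_mul hμS).symm
          _ = ∫⁻ x, {x | κ x t ≠ 0}.indicator (fun _ => (⊤ : ℝ≥0∞)) x ∂μ := by
              rw [lintegral_indicator_const hSm]
          _ ≤ ∫⁻ x, klDiv (κ x) p ∂μ := by
              refine lintegral_mono fun x => ?_
              by_cases hx : x ∈ {x | κ x t ≠ 0}
              · rw [Set.indicator_of_mem hx]
                have : ¬ κ x ≪ p := fun hc => hx (hc hpt)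
                rw [klDiv_of_neg fun hc => this hc.1]
              · rw [Set.indicator_of_notMem hx]
                exact zero_le
      rw [hF, hkl, add_top]
  refine ⟨?_, ⟨?_, ?_⟩, ?_⟩
  · rw [star]
    exact le_self_add
  · intro h
    have hk0 : klDiv q p = 0 := by
      rw [star] at h
      calc klDiv q p = (∫⁻ x, klDiv (κ x) q ∂μ + klDiv q p) - ∫⁻ x, klDiv (κ x) q ∂μ :=
            (ENNReal.add_sub_cancel_left hfin.ne).symm
        _ = ∫⁻ x, klDiv (κ x) q ∂μ - ∫⁻ x, klDiv (κ x) q ∂μ := by rw [h]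
        _ = 0 := tsub_self _
    by_cases hc : q ≪ p ∧ Integrable (llr q p) q
    · have hv := klDiv_of_pos hc
      rw [hk0] at hv
      exact (eq_of_integral_llr_nonpos q p hc.1 hc.2
        (ENNReal.ofReal_eq_zero.mp hv.symm)).symm
    · have hv := klDiv_of_neg hc
      rw [hk0] at hv
      exact absurd hv (by simp)
  · intro h
    rw [h]
  · rw [star]
    exact ENNReal.add_sub_cancel_left hfin.ne
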